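/- Let Sk₃ : M(3,ℂ) → M(3,ℂ) be defined by Sk₃(X) = (1/2)·Σ_{1≤i<j≤3} A_{(i,j)} X A_{(i,j)}†, where A_{(i,j)} = e_i e_j† − e_j e_i†. Then Sk₃ is doubly stochastic: Sk₃(I) = I and Sk₃*(I) = I; moreover for any unit vector x ∈ ℝ³, the image of Sk₃(xx†) is the orthogonal complement of x in ℝ³ (a 2-dimensional subspace), so in particular x ∉ Im Sk₃(xx†). -/

import Mathlib

open Matrix

/-- The skew-symmetric basis matrix `A_{(i,j)} = e_i e_j† − e_j e_i†`. -/
noncomputable def Askew (i j : Fin 3) : Matrix (Fin 3) (Fin 3) ℂ :=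
  Matrix.single i j 1 - Matrix.single j i 1

/-- The completely positive operator
`Sk₃(X) = (1/2)·Σ_{1≤i<j≤3} A_{(i,j)} X A_{(i,j)}†`. -/
noncomputable def Sk3 (X : Matrix (Fin 3) (Fin 3) ℂ) : Matrix (Fin 3) (Fin 3) ℂ :=
  (2 : ℂ)⁻¹ • (Askew 0 1 * X * (Askew 0 1)ᴴ + Askew 0 2 * X * (Askew 0 2)ᴴ +
    Askew 1 2 * X * (Askew 1 2)ᴴ)

lemma Sk3_key (c : Fin 3 → ℂ) (hc : ∀ i, (starRingEnd ℂ) (c i) = c i) (v : Fin 3 → ℂ) :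
    (Sk3 (vecMulVec c c)).mulVec v =
      fun i => (2 : ℂ)⁻¹ * ((∑ j, c j * c j) * v i - (∑ j, c j * v j) * c i) := by
  funext i
  have h0 := hc 0; have h1 := hc 1; have h2 := hc 2
  fin_cases i <;>
    simp [Sk3, Askew, Matrix.mulVec, dotProduct, Matrix.mul_apply,
      Fin.sum_univ_three, Matrix.single, Matrix.conjTranspose_apply,
      Matrix.vecMulVec_apply, h0, h1, h2] <;> ring

theorem Sk3_doublyStochastic_and_image :
    Sk3 1 = 1 ∧
    (∀ X : Matrix (Fin 3) (Fin 3) ℂ, Matrix.trace (Sk3 X) = Matrix.trace X) ∧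
    (∀ x : Fin 3 → ℝ, (∑ i, x i ^ 2) = 1 →
      (Set.range (Sk3 (vecMulVec (fun i => (x i : ℂ)) (fun i => (x i : ℂ)))).mulVec =
        {v : Fin 3 → ℂ | ∑ i, (x i : ℂ) * v i = 0}) ∧
      (fun i => (x i : ℂ)) ∉
        Set.range (Sk3 (vecMulVec (fun i => (x i : ℂ)) (fun i => (x i : ℂ)))).mulVec) := by
  refine ⟨?_, ?_, ?_⟩
  · ext i j
    fin_cases i <;> fin_cases j <;>
      simp [Sk3, Askew, Matrix.mul_apply, Fin.sum_univ_three, Matrix.one_apply,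
        Matrix.single, Matrix.conjTranspose_apply] <;> norm_num
  · intro X
    simp [Sk3, Askew, Matrix.trace, Matrix.diag, Matrix.mul_apply, Fin.sum_univ_three,
      Matrix.single, Matrix.conjTranspose_apply]
    ring
  · intro x hx
    set c : Fin 3 → ℂ := fun i => (x i : ℂ) with hcdef
    have hc : ∀ i, (starRingEnd ℂ) (c i) = c i := fun i => Complex.conj_ofReal _
    have hnorm : (∑ j, c j * c j) = 1 := by
      have : ((∑ i, x i ^ 2 : ℝ) : ℂ) = 1 := by rw [hx]; norm_num
      rw [← this]; push_cast; exact Finset.sum_congr rfl fun i _ => by ring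
    have hkey : ∀ v, (Sk3 (vecMulVec c c)).mulVec v =
        fun i => (2 : ℂ)⁻¹ * (v i - (∑ j, c j * v j) * c i) := by
      intro v; rw [Sk3_key c hc v, hnorm]; simp
    have hsub : Set.range (Sk3 (vecMulVec c c)).mulVec ⊆ {v | ∑ i, c i * v i = 0} := by
      rintro w ⟨v, rfl⟩
      simp only [Set.mem_setOf_eq, hkey v, Fin.sum_univ_three]
      rw [Fin.sum_univ_three] at hnorm
      linear_combination (-(2:ℂ)⁻¹ * (c 0 * v 0 + c 1 * v 1 + c 2 * v 2)) * hnorm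
    refine ⟨Set.Subset.antisymm hsub ?_, ?_⟩
    · intro w hw
      refine ⟨(2 : ℂ) • w, ?_⟩
      rw [hkey]
      funext i
      have h2 : (∑ j, c j * ((2:ℂ) • w) j) = 2 * ∑ j, c j * w j := by
        rw [Finset.mul_sum]; exact Finset.sum_congr rfl fun j _ => by simp; ring
      rw [h2, hw]
      simp
    · intro hmem
      have := hsub hmem
      simp only [Set.mem_setOf_eq] at this
      rw [show (∑ i, c i * c i) = 1 from hnorm] at this
      exact one_ne_zero this
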